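/- Let (W,S) be a Coxeter system, s ∈ S, and let odd(s) be the set of t ∈ S reachable from s by a path in the Coxeter diagram all of whose edge labels are odd. Suppose z is an element of the center of ⟨K_s⟩, where K_s is the union of all spherical irreducible components of eodd(s) := odd(s) ∪ {t ∈ S : o(tt') < ∞ for some t' ∈ odd(s)} not containing s. Then the map θ_{s,z}: S → W defined by θ_{s,z}(t) = tz for t ∈ odd(s) and θ_{s,z}(t) = t otherwise extends to an involutory automorphism of W. -/

import Mathlib

variable {B : Type*}

/-- The odd component `odd(s)`: the set of `t ∈ S` reachable from `s` by paths in the Coxeter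
diagram all of whose edge labels are odd. -/
def oddComponent (M : CoxeterMatrix B) (s : B) : Set B :=
  {t | Relation.ReflTransGen (fun a b => a ≠ b ∧ Odd (M a b)) s t}

/-- `eodd(s) = odd(s) ∪ {t ∈ S : o(t t') < ∞ for some t' ∈ odd(s)}` (entry `0` encodes `∞`). -/
def eoddComponent (M : CoxeterMatrix B) (s : B) : Set B :=
  oddComponent M s ∪ {t | ∃ t' ∈ oddComponent M s, M t t' ≠ 0}

/-- Connectedness inside `eodd(s)` via edges of the Coxeter diagram (edges are pairs `a ≠ b`
with `m_{ab} ≠ 2`, i.e. label `≥ 3` or `∞`). -/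
def eoddConn (M : CoxeterMatrix B) (s : B) (t u : B) : Prop :=
  Relation.ReflTransGen
    (fun a b => a ∈ eoddComponent M s ∧ b ∈ eoddComponent M s ∧ a ≠ b ∧ M a b ≠ 2) t u

/-- `K_s`: the union of all spherical irreducible components of `eodd(s)` not containing `s`. -/
def sphericalPart {W : Type*} [Group W] (M : CoxeterMatrix B) (cs : CoxeterSystem M W)
    (s : B) : Set B :=
  {t ∈ eoddComponent M s | ¬ eoddConn M s t s ∧
    ((Subgroup.closure (cs.simple '' {u | eoddConn M s t u}) : Subgroup W) : Set W).Finite}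

/-! ### Auxiliary material -/

namespace TransvectionAux

open CoxeterSystem List

section SetLemmas

variable {M : CoxeterMatrix B} {s : B}

lemma odd_subset_eodd : oddComponent M s ⊆ eoddComponent M s :=
  Set.subset_union_left

lemma eoddConn_symm {t u : B} (h : eoddConn M s t u) : eoddConn M s u t := by
  refine (@Relation.ReflTransGen.symmetric _ _ ⟨?_⟩).symm _ _ h
  rintro a b ⟨ha, hb, hne, h2⟩
  exact ⟨hb, ha, hne.symm, by rwa [M.symmetric b a]⟩

lemma eoddConn_of_mem_odd {t : B} (h : t ∈ oddComponent M s) : eoddConn M s s t := by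
  induction h with
  | refl => exact Relation.ReflTransGen.refl
  | tail h₁ h₂ ih =>
    refine ih.tail ⟨odd_subset_eodd h₁, odd_subset_eodd (h₁.tail h₂), h₂.1, ?_⟩
    intro hc
    have := h₂.2
    rw [hc] at this
    simp [Nat.odd_iff] at this

end SetLemmas

section Parity

open scoped Classical

variable {W : Type*} [Group W] {M : CoxeterMatrix B} (cs : CoxeterSystem M W)

/-- One step of Tits's sign representation. -/
noncomputable def tflip (i : B) : W × ZMod 2 → W × ZMod 2 :=
  fun x => (cs.simple i * x.1 * cs.simple i,
    x.2 + if x.1 = cs.simple i then 1 else 0)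

lemma one_add_one_zmod : (1 : ZMod 2) + 1 = 0 := by decide

lemma tflip_tflip (i : B) (x : W × ZMod 2) : tflip cs i (tflip cs i x) = x := by
  obtain ⟨t, ε⟩ := x
  have h1 : cs.simple i * (cs.simple i * t * cs.simple i) * cs.simple i = t := by
    simp [mul_assoc, cs.simple_mul_simple_cancel_left, cs.simple_mul_simple_self]
  have h2 : (cs.simple i * t * cs.simple i = cs.simple i) ↔ t = cs.simple i := by
    constructor
    · intro h
      have := congrArg (fun w => cs.simple i * w * cs.simple i) h
      simpa [mul_assoc, cs.simple_mul_simple_cancel_left, cs.simple_mul_simple_self] using this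
    · rintro rfl
      simp [mul_assoc, cs.simple_mul_simple_cancel_left, cs.simple_mul_simple_self]
  simp only [tflip, h1]
  refine Prod.ext rfl ?_
  show ε + _ + _ = ε
  by_cases h : t = cs.simple i
  · simp only [h2, if_pos h, add_assoc, one_add_one_zmod, add_zero]
  · simp only [h2, if_neg h, add_zero]

/-- Tits's sign representation: image of a simple reflection. -/
noncomputable def tperm (i : B) : Equiv.Perm (W × ZMod 2) where
  toFun := tflip cs i
  invFun := tflip cs i
  left_inv := tflip_tflip cs i
  right_inv := tflip_tflip cs i

lemma tperm_apply (i : B) (t : W) (ε : ZMod 2) :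
    tperm cs i (t, ε) = (cs.simple i * t * cs.simple i,
      ε + if t = cs.simple i then 1 else 0) := rfl

lemma inv_mul_simple (i j : B) :
    (cs.simple i * cs.simple j)⁻¹ * cs.simple j
      = cs.simple j * (cs.simple i * cs.simple j) := by
  rw [mul_inv_rev, cs.inv_simple, cs.inv_simple]
  simp only [mul_assoc]

lemma key_comm (i j : B) (k : ℕ) :
    ((cs.simple i * cs.simple j) ^ k)⁻¹ * cs.simple j
      = cs.simple j * (cs.simple i * cs.simple j) ^ k := by
  induction k with
  | zero => simp
  | succ k ih =>
    rw [pow_succ (cs.simple i * cs.simple j) k, mul_inv_rev, mul_assoc, ih, ← mul_assoc,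
      inv_mul_simple cs i j, mul_assoc, ← pow_succ' (cs.simple i * cs.simple j) k,
      ← pow_succ (cs.simple i * cs.simple j) k]

lemma tperm_pow_apply (i j : B) (k : ℕ) (t : W) (ε : ZMod 2) :
    ((tperm cs i * tperm cs j) ^ k) (t, ε) =
      ((cs.simple i * cs.simple j) ^ k * t * ((cs.simple i * cs.simple j) ^ k)⁻¹,
        ε + ∑ r ∈ Finset.range (2 * k),
          if t = cs.simple j * (cs.simple i * cs.simple j) ^ r then 1 else 0) := by
  induction k with
  | zero => simp
  | succ k ih =>
    rw [pow_succ' (tperm cs i * tperm cs j) k, Equiv.Perm.mul_apply, ih,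
      Equiv.Perm.mul_apply, tperm_apply, tperm_apply]
    set w : W := cs.simple i * cs.simple j with hw
    have e1 : cs.simple i * (cs.simple j * (w ^ k * t * (w ^ k)⁻¹) * cs.simple j) * cs.simple i
        = w ^ (k + 1) * t * (w ^ (k + 1))⁻¹ := by
      rw [hw]
      simp only [pow_succ', mul_inv_rev, cs.inv_simple, mul_assoc]
    have hiff1 : (w ^ k * t * (w ^ k)⁻¹ = cs.simple j) ↔ t = cs.simple j * w ^ (2 * k) := by
      have hkey : (w ^ k)⁻¹ * cs.simple j * w ^ k = cs.simple j * w ^ (2 * k) := by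
        rw [key_comm cs i j k, mul_assoc, ← pow_add, two_mul]
      rw [← hkey]
      constructor
      · intro h; rw [← h]; group
      · intro h; rw [h]; group
    have hiff2 : (cs.simple j * (w ^ k * t * (w ^ k)⁻¹) * cs.simple j = cs.simple i)
        ↔ t = cs.simple j * w ^ (2 * k + 1) := by
      have step1 : (cs.simple j * (w ^ k * t * (w ^ k)⁻¹) * cs.simple j = cs.simple i)
          ↔ w ^ k * t * (w ^ k)⁻¹ = cs.simple j * cs.simple i * cs.simple j := by
        constructor
        · intro h
          rw [← h]
          simp [mul_assoc, cs.simple_mul_simple_cancel_left, cs.simple_mul_simple_self]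
        · intro h
          rw [h]
          simp [mul_assoc, cs.simple_mul_simple_cancel_left, cs.simple_mul_simple_self]
      have step2 : (w ^ k)⁻¹ * (cs.simple j * cs.simple i * cs.simple j) * w ^ k
          = cs.simple j * w ^ (2 * k + 1) := by
        have hjij : cs.simple j * cs.simple i * cs.simple j = cs.simple j * w := by
          rw [hw]; simp only [mul_assoc]
        rw [hjij, ← mul_assoc, key_comm cs i j k, mul_assoc, mul_assoc, ← pow_succ' w,
          ← pow_add]
        congr 2
        omega
      rw [step1, ← step2]
      constructor
      · intro h; rw [← h]; group
      · intro h; rw [h]; group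
    have hrange : 2 * (k + 1) = (2 * k) + 1 + 1 := by omega
    refine Prod.ext e1 ?_
    show _ + _ + _ = ε + ∑ r ∈ Finset.range (2 * (k + 1)), _
    rw [hrange, Finset.sum_range_succ, Finset.sum_range_succ]
    by_cases h1 : t = cs.simple j * w ^ (2 * k) <;>
      by_cases h2 : t = cs.simple j * w ^ (2 * k + 1)
    · rw [if_pos (hiff1.mpr h1), if_pos (hiff2.mpr h2), if_pos h1, if_pos h2]; ring
    · rw [if_pos (hiff1.mpr h1), if_neg (fun hc => h2 (hiff2.mp hc)), if_pos h1, if_neg h2]; ring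
    · rw [if_neg (fun hc => h1 (hiff1.mp hc)), if_pos (hiff2.mpr h2), if_neg h1, if_pos h2]; ring
    · rw [if_neg (fun hc => h1 (hiff1.mp hc)), if_neg (fun hc => h2 (hiff2.mp hc)),
        if_neg h1, if_neg h2]; ring

lemma two_zmod_zero : (2 : ZMod 2) = 0 := by decide

lemma tperm_liftable : M.IsLiftable (fun i => (tperm cs i : Equiv.Perm (W × ZMod 2))) := by
  intro i j
  apply Equiv.ext
  rintro ⟨t, ε⟩
  have hpow : (cs.simple i * cs.simple j) ^ (M i j) = 1 := cs.simple_mul_simple_pow i j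
  have h1 := tperm_pow_apply cs i j (M i j) t ε
  rw [hpow] at h1
  have hsum : (∑ r ∈ Finset.range (2 * M i j),
      if t = cs.simple j * (cs.simple i * cs.simple j) ^ r then (1 : ZMod 2) else 0) = 0 := by
    have h2m : 2 * M i j = M i j + M i j := by omega
    rw [h2m, Finset.range_eq_Ico, ← Finset.sum_Ico_consecutive _ (Nat.zero_le (M i j))
      (Nat.le_add_left (M i j) (M i j)), Finset.sum_Ico_eq_sum_range,
      Finset.sum_Ico_eq_sum_range]
    simp only [Nat.add_sub_cancel, Nat.sub_zero, Nat.zero_add, zero_add]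
    have heq : (∑ r ∈ Finset.range (M i j),
        if t = cs.simple j * (cs.simple i * cs.simple j) ^ (M i j + r) then (1 : ZMod 2) else 0)
        = ∑ r ∈ Finset.range (M i j),
          if t = cs.simple j * (cs.simple i * cs.simple j) ^ r then (1 : ZMod 2) else 0 := by
      refine Finset.sum_congr rfl fun r _ => ?_
      rw [pow_add, hpow, one_mul]
    rw [heq, ← two_mul, two_zmod_zero, zero_mul]

  rw [h1, Equiv.Perm.one_apply]
  refine Prod.ext ?_ ?_
  · show 1 * t * (1 : W)⁻¹ = t
    rw [one_mul, inv_one, mul_one]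
  · show ε + _ = ε
    rw [hsum, add_zero]

/-- Tits's sign representation. -/
noncomputable def trho : W →* Equiv.Perm (W × ZMod 2) :=
  cs.lift ⟨fun i => tperm cs i, tperm_liftable cs⟩

lemma trho_simple (i : B) : trho cs (cs.simple i) = tperm cs i :=
  cs.lift_apply_simple (tperm_liftable cs) i

lemma rightInvSeq_cons (i : B) (ω : List B) :
    cs.rightInvSeq (i :: ω) =
      ((cs.wordProd ω)⁻¹ * cs.simple i * cs.wordProd ω) :: cs.rightInvSeq ω := rfl

lemma trho_wordProd (ω : List B) (t : W) (ε : ZMod 2) :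
    trho cs (cs.wordProd ω) (t, ε) =
      (cs.wordProd ω * t * (cs.wordProd ω)⁻¹,
        ε + (List.count t (cs.rightInvSeq ω) : ZMod 2)) := by
  induction ω with
  | nil => simp [trho]
  | cons i ω ih =>
    rw [cs.wordProd_cons, map_mul, Equiv.Perm.mul_apply, ih, trho_simple, tperm_apply]
    have e1 : cs.simple i * (cs.wordProd ω * t * (cs.wordProd ω)⁻¹) * cs.simple i
        = cs.wordProd (i :: ω) * t * (cs.wordProd (i :: ω))⁻¹ := by
      rw [cs.wordProd_cons, mul_inv_rev, cs.inv_simple]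
      simp only [mul_assoc]
    have hiff : (cs.wordProd ω * t * (cs.wordProd ω)⁻¹ = cs.simple i)
        ↔ t = (cs.wordProd ω)⁻¹ * cs.simple i * cs.wordProd ω := by
      constructor
      · intro h; rw [← h]; group
      · intro h; rw [h]; group
    refine Prod.ext e1 ?_
    show _ + _ + _ = ε + _
    rw [rightInvSeq_cons, List.count_cons]
    push_cast
    by_cases h : t = (cs.wordProd ω)⁻¹ * cs.simple i * cs.wordProd ω
    · rw [if_pos (hiff.mpr h), if_pos (by exact beq_iff_eq.mpr h.symm)]
      ring
    · rw [if_neg (fun hc => h (hiff.mp hc)),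
        if_neg (by simp only [beq_iff_eq]; exact fun hc => h hc.symm)]
      ring

/-- The parity of the number of occurrences of `t` in the right inversion sequence depends
only on the product of the word. -/
lemma count_parity_eq {ω ω' : List B} (h : cs.wordProd ω = cs.wordProd ω') (t : W) :
    ((List.count t (cs.rightInvSeq ω) : ZMod 2)) = (List.count t (cs.rightInvSeq ω') : ZMod 2) := by
  have h1 := trho_wordProd cs ω t 0
  have h2 := trho_wordProd cs ω' t 0
  rw [h] at h1
  rw [h1] at h2
  have := congrArg Prod.snd h2
  simpa using this

/-- If `b` is a right descent of `w`, then for every word `ω` representing `w`, the simple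
reflection of `b` occurs an odd number of times in the right inversion sequence of `ω`. -/
lemma count_odd_of_isRightDescent {w : W} {b : B} (hd : cs.IsRightDescent w b)
    (ω : List B) (hw : cs.wordProd ω = w) :
    (List.count (cs.simple b) (cs.rightInvSeq ω) : ZMod 2) = 1 := by
  obtain ⟨ω₁, hr, he⟩ := cs.exists_reduced_word' (w * cs.simple b)
  have hlen : cs.length (w * cs.simple b) + 1 = cs.length w := cs.isRightDescent_iff.mp hd
  have hπ : cs.wordProd (ω₁.concat b) = w := by
    rw [cs.wordProd_concat, ← he, mul_assoc, cs.simple_mul_simple_self, mul_one]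
  have hred : cs.IsReduced (ω₁.concat b) := by
    unfold CoxeterSystem.IsReduced at hr ⊢
    rw [hπ, List.length_concat]
    rw [← he] at hr
    omega
  have hmem : cs.simple b ∈ cs.rightInvSeq (ω₁.concat b) := by
    rw [cs.rightInvSeq_concat]
    simp
  have hcount : List.count (cs.simple b) (cs.rightInvSeq (ω₁.concat b)) = 1 :=
    List.count_eq_one_of_mem (hred.nodup_rightInvSeq) hmem
  have hpar := count_parity_eq cs (ω := ω) (ω' := ω₁.concat b) (by rw [hw, hπ]) (cs.simple b)
  rw [hpar, hcount]
  norm_num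

lemma wordProd_mem_closure {X : Set B} {ω : List B} (h : ∀ i ∈ ω, i ∈ X) :
    cs.wordProd ω ∈ Subgroup.closure (cs.simple '' X) := by
  induction ω with
  | nil => rw [cs.wordProd_nil]; exact one_mem _
  | cons i ω ih =>
    rw [cs.wordProd_cons]
    exact mul_mem (Subgroup.subset_closure ⟨i, h i (List.mem_cons_self), rfl⟩)
      (ih fun j hj => h j (List.mem_cons_of_mem i hj))

lemma rightInvSeq_mem_closure {X : Set B} {ω : List B} (h : ∀ i ∈ ω, i ∈ X) :
    ∀ t ∈ cs.rightInvSeq ω, t ∈ Subgroup.closure (cs.simple '' X) := by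
  induction ω with
  | nil => simp
  | cons i ω ih =>
    intro t ht
    rw [rightInvSeq_cons] at ht
    rcases List.mem_cons.mp ht with h1 | h2
    · subst h1
      have hω : cs.wordProd ω ∈ Subgroup.closure (cs.simple '' X) :=
        wordProd_mem_closure cs fun j hj => h j (List.mem_cons_of_mem i hj)
      have hi : cs.simple i ∈ Subgroup.closure (cs.simple '' X) :=
        Subgroup.subset_closure ⟨i, h i (List.mem_cons_self), rfl⟩
      exact mul_mem (mul_mem (inv_mem hω) hi) hω
    · exact ih (fun j hj => h j (List.mem_cons_of_mem i hj)) t h2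

lemma exists_word_of_mem_closure {X : Set B} {w : W}
    (h : w ∈ Subgroup.closure (cs.simple '' X)) :
    ∃ ω : List B, (∀ i ∈ ω, i ∈ X) ∧ cs.wordProd ω = w := by
  refine Subgroup.closure_induction ?_ ?_ ?_ ?_ h
  · rintro x ⟨i, hi, rfl⟩
    exact ⟨[i], by simpa using hi, by simp⟩
  · exact ⟨[], by simp, by simp⟩
  · rintro x y _ _ ⟨ω₁, h₁, rfl⟩ ⟨ω₂, h₂, rfl⟩
    exact ⟨ω₁ ++ ω₂, fun i hi => ((List.mem_append.mp hi).elim (h₁ i) (h₂ i)),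
      cs.wordProd_append ω₁ ω₂⟩
  · rintro x _ ⟨ω, h₁, rfl⟩
    exact ⟨ω.reverse, fun i hi => h₁ i (List.mem_reverse.mp hi), cs.wordProd_reverse ω⟩

/-- The key lemma: a central element of a standard parabolic subgroup is an involution. -/
lemma central_sq_eq_one {X : Set B} {z : W}
    (hz : z ∈ Subgroup.closure (cs.simple '' X))
    (hzc : ∀ x ∈ Subgroup.closure (cs.simple '' X), z * x = x * z) :
    z * z = 1 := by
  by_contra hne
  obtain ⟨b, hb⟩ := cs.exists_rightDescent_of_ne_one hne
  obtain ⟨ωz, hωzX, hπz⟩ := exists_word_of_mem_closure cs hz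
  have hπ2 : cs.wordProd (ωz ++ ωz) = z * z := by rw [cs.wordProd_append, hπz]
  have hcnt : (List.count (cs.simple b) (cs.rightInvSeq (ωz ++ ωz)) : ZMod 2) = 1 :=
    count_odd_of_isRightDescent cs hb (ωz ++ ωz) hπ2
  have hmem : cs.simple b ∈ cs.rightInvSeq (ωz ++ ωz) := by
    by_contra hc
    rw [List.count_eq_zero_of_not_mem hc] at hcnt
    simp only [Nat.cast_zero] at hcnt
    exact absurd hcnt.symm one_ne_zero
  have hX2 : ∀ i ∈ ωz ++ ωz, i ∈ X := fun i hi =>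
    (List.mem_append.mp hi).elim (hωzX i) (hωzX i)
  have hbH : cs.simple b ∈ Subgroup.closure (cs.simple '' X) :=
    rightInvSeq_mem_closure cs hX2 _ hmem
  have hcomm : z * cs.simple b * z⁻¹ = cs.simple b := by
    rw [hzc _ hbH]
    group
  have h1 := trho_wordProd cs (ωz ++ ωz) (cs.simple b) 0
  rw [hπ2, hcnt] at h1
  have h2 := trho_wordProd cs ωz (cs.simple b) 0
  rw [hπz, hcomm] at h2
  have h3 := trho_wordProd cs ωz (cs.simple b)
    ((List.count (cs.simple b) (cs.rightInvSeq ωz) : ZMod 2))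
  rw [hπz, hcomm] at h3
  have h4 : trho cs (z * z) (cs.simple b, (0 : ZMod 2)) =
      (cs.simple b, (List.count (cs.simple b) (cs.rightInvSeq ωz) : ZMod 2)
        + (List.count (cs.simple b) (cs.rightInvSeq ωz) : ZMod 2)) := by
    rw [map_mul, Equiv.Perm.mul_apply, h2]
    simpa using h3
  rw [h1] at h4
  have h5 := congrArg Prod.snd h4
  simp only [zero_add] at h5
  have hzero : ((List.count (cs.simple b) (cs.rightInvSeq ωz) : ZMod 2)
      + (List.count (cs.simple b) (cs.rightInvSeq ωz) : ZMod 2)) = 0 := by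
    rw [← two_mul, two_zmod_zero, zero_mul]
  rw [hzero] at h5
  exact one_ne_zero h5

end Parity

end TransvectionAux

open TransvectionAux CoxeterSystem in
/-- Let `(W, S)` be a Coxeter system, `s ∈ S`, and let `z` be a central element
of `⟨K_s⟩`, where `K_s` is the union of the spherical irreducible components of `eodd(s)` not
containing `s`.  Then the map `θ_{s,z}` sending `t ↦ t z` for `t ∈ odd(s)` and fixing the
other simple reflections extends to an involutory automorphism of `W` (an `s`-transvection). -/
theorem coxeter_transvection_extends_to_involutory_automorphism
    {W : Type*} [Group W] {M : CoxeterMatrix B} (cs : CoxeterSystem M W) (s : B) (z : W)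
    (hz : z ∈ Subgroup.closure (cs.simple '' sphericalPart M cs s))
    (hzc : ∀ x ∈ Subgroup.closure (cs.simple '' sphericalPart M cs s), z * x = x * z) :
    ∃ φ : W ≃* W,
      (∀ t ∈ oddComponent M s, φ (cs.simple t) = cs.simple t * z) ∧
      (∀ t : B, t ∉ oddComponent M s → φ (cs.simple t) = cs.simple t) ∧
      (∀ w : W, φ (φ w) = w) := by
  classical
  -- `K_s` is disjoint from `odd(s)`
  have hdisj : ∀ u ∈ sphericalPart M cs s, u ∉ oddComponent M s := by
    intro u hu hmem
    exact hu.2.1 (eoddConn_symm (eoddConn_of_mem_odd hmem))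
  -- `z` commutes with every simple reflection indexed by `eodd(s)`
  have hcomm : ∀ b ∈ eoddComponent M s, z * cs.simple b = cs.simple b * z := by
    intro b hb
    by_cases hbs : b ∈ sphericalPart M cs s
    · exact hzc _ (Subgroup.subset_closure ⟨b, hbs, rfl⟩)
    · have key : ∀ u ∈ sphericalPart M cs s,
          cs.simple u * cs.simple b = cs.simple b * cs.simple u := by
        intro u hu
        have h2 : M u b = 2 := by
          by_contra hne
          have hub : u ≠ b := fun h => hbs (h ▸ hu)
          have step : eoddConn M s u b := Relation.ReflTransGen.single ⟨hu.1, hb, hub, hne⟩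
          apply hbs
          refine ⟨hb, fun hconnbs => hu.2.1 (step.trans hconnbs), ?_⟩
          have hset : {v | eoddConn M s b v} = {v | eoddConn M s u v} := by
            ext v
            exact ⟨fun hv => step.trans hv, fun hv => (eoddConn_symm step).trans hv⟩
          rw [hset]
          exact hu.2.2
        have hpow := cs.simple_mul_simple_pow u b
        rw [h2] at hpow
        have hsq : cs.simple u * cs.simple b * (cs.simple u * cs.simple b) = 1 := by
          rw [← sq]; exact hpow
        have hinv : cs.simple u * cs.simple b = (cs.simple u * cs.simple b)⁻¹ :=
          eq_inv_of_mul_eq_one_left hsq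
        rw [hinv, mul_inv_rev, cs.inv_simple, cs.inv_simple]
      refine Subgroup.closure_induction
        (p := fun x _ => x * cs.simple b = cs.simple b * x) ?_ ?_ ?_ ?_ hz
      · rintro x ⟨u, hu, rfl⟩
        exact key u hu
      · simp
      · intro x y _ _ hx hy
        rw [mul_assoc, hy, ← mul_assoc, hx, mul_assoc]
      · intro x _ hx
        calc x⁻¹ * cs.simple b = x⁻¹ * cs.simple b * x * x⁻¹ := by group
          _ = x⁻¹ * (x * cs.simple b) * x⁻¹ := by rw [mul_assoc x⁻¹ (cs.simple b) x, ← hx]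
          _ = cs.simple b * x⁻¹ := by group
  -- `z` is an involution
  have hz2 : z * z = 1 := central_sq_eq_one cs hz hzc
  -- the twisted system of generators
  set f : B → W := fun t => if t ∈ oddComponent M s then cs.simple t * z else cs.simple t with hf
  have hzcomm_odd : ∀ t ∈ oddComponent M s, z * cs.simple t = cs.simple t * z :=
    fun t ht => hcomm t (odd_subset_eodd ht)
  have hzpow_even : ∀ m : ℕ, Even m → z ^ m = 1 := by
    intro m hm
    obtain ⟨k, hk⟩ := hm
    have hm2 : m = 2 * k := by omega
    rw [hm2, pow_mul, sq, hz2, one_pow]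
  -- liftability
  have hlift : M.IsLiftable f := by
    intro a b
    by_cases ha : a ∈ oddComponent M s <;> by_cases hb : b ∈ oddComponent M s
    · -- both in odd(s)
      have hfab : f a * f b = cs.simple a * cs.simple b := by
        simp only [hf, if_pos ha, if_pos hb]
        calc cs.simple a * z * (cs.simple b * z)
            = cs.simple a * (z * cs.simple b) * z := by group
          _ = cs.simple a * (cs.simple b * z) * z := by rw [hzcomm_odd b hb]
          _ = cs.simple a * cs.simple b * (z * z) := by group
          _ = cs.simple a * cs.simple b := by rw [hz2, mul_one]
      rw [hfab]
      exact cs.simple_mul_simple_pow a b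
    · -- a in, b out
      rcases eq_or_ne (M a b) 0 with h0 | h0
      · rw [h0, pow_zero]
      have hbe : b ∈ eoddComponent M s := Or.inr ⟨a, ha, by rw [M.symmetric b a]; exact h0⟩
      have heven : Even (M a b) := by
        rcases Nat.even_or_odd (M a b) with h | h
        · exact h
        · exact absurd (ha.tail ⟨fun hc => hb (by rw [← hc]; exact ha), h⟩) hb
      have hfab : f a * f b = cs.simple a * cs.simple b * z := by
        simp only [hf, if_pos ha, if_neg hb]
        calc cs.simple a * z * cs.simple b
            = cs.simple a * (z * cs.simple b) := by group
          _ = cs.simple a * (cs.simple b * z) := by rw [hcomm b hbe]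
          _ = cs.simple a * cs.simple b * z := by group
      rw [hfab]
      have hcz : Commute (cs.simple a * cs.simple b) z := by
        have h1 : Commute (cs.simple a) z := (hcomm a (odd_subset_eodd ha)).symm
        have h2 : Commute (cs.simple b) z := (hcomm b hbe).symm
        exact h1.mul_left h2
      rw [hcz.mul_pow, cs.simple_mul_simple_pow a b, one_mul, hzpow_even _ heven]
    · -- a out, b in
      rcases eq_or_ne (M a b) 0 with h0 | h0
      · rw [h0, pow_zero]
      have hae : a ∈ eoddComponent M s := Or.inr ⟨b, hb, h0⟩
      have heven : Even (M a b) := by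
        rcases Nat.even_or_odd (M a b) with h | h
        · exact h
        · have hba : Odd (M b a) := by rwa [M.symmetric b a]
          exact absurd (hb.tail ⟨fun hc => ha (by rw [← hc]; exact hb), hba⟩) ha
      have hfab : f a * f b = cs.simple a * cs.simple b * z := by
        simp only [hf, if_neg ha, if_pos hb]
        group
      rw [hfab]
      have hcz : Commute (cs.simple a * cs.simple b) z := by
        have h1 : Commute (cs.simple a) z := (hcomm a hae).symm
        have h2 : Commute (cs.simple b) z := (hcomm b (odd_subset_eodd hb)).symm
        exact h1.mul_left h2
      rw [hcz.mul_pow, cs.simple_mul_simple_pow a b, one_mul, hzpow_even _ heven]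
    · -- both out
      have hfab : f a * f b = cs.simple a * cs.simple b := by
        simp only [hf, if_neg ha, if_neg hb]
      rw [hfab]
      exact cs.simple_mul_simple_pow a b
  -- the lifted endomorphism
  set φ₀ : W →* W := cs.lift ⟨f, hlift⟩ with hφ₀
  have hφ₀simple : ∀ i : B, φ₀ (cs.simple i) = f i := fun i => cs.lift_apply_simple hlift i
  have hφ₀odd : ∀ t ∈ oddComponent M s, φ₀ (cs.simple t) = cs.simple t * z := by
    intro t ht
    rw [hφ₀simple t]
    simp only [hf, if_pos ht]
  have hφ₀nodd : ∀ t : B, t ∉ oddComponent M s → φ₀ (cs.simple t) = cs.simple t := by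
    intro t ht
    rw [hφ₀simple t]
    simp only [hf, if_neg ht]
  -- φ₀ fixes z
  have hφ₀z : φ₀ z = z := by
    refine Subgroup.closure_induction (p := fun x _ => φ₀ x = x) ?_ ?_ ?_ ?_ hz
    · rintro x ⟨u, hu, rfl⟩
      exact hφ₀nodd u (hdisj u hu)
    · simp
    · intro x y _ _ hx hy
      rw [map_mul, hx, hy]
    · intro x _ hx
      rw [map_inv, hx]
  -- φ₀ is an involution
  have hinv : ∀ w : W, φ₀ (φ₀ w) = w := by
    intro w
    refine cs.simple_induction (p := fun x => φ₀ (φ₀ x) = x) w ?_ ?_ ?_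
    · intro i
      by_cases hi : i ∈ oddComponent M s
      · rw [hφ₀odd i hi, map_mul, hφ₀odd i hi, hφ₀z, mul_assoc, hz2, mul_one]
      · rw [hφ₀nodd i hi, hφ₀nodd i hi]
    · simp
    · intro w₁ w₂ h₁ h₂
      rw [map_mul, map_mul, h₁, h₂]
  let φ : W ≃* W :=
    { toFun := φ₀
      invFun := φ₀
      left_inv := hinv
      right_inv := hinv
      map_mul' := fun x y => map_mul φ₀ x y }
  exact ⟨φ, hφ₀odd, hφ₀nodd, hinv⟩
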